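/- Let p, y be points in a normed space and A a nonempty subset such that p ∉ A, the distance d(x,A) is attained for every x ∈ [p,y), d(y,p) ≤ d(y,A), and for every a ∈ A the segment [p,a] is not parallel to any nondegenerate segment contained in the unit sphere. Then d(x,p) < d(x,A) for all x ∈ [p,y). -/

import Mathlib

open Metric

/-- If equality holds in the triangle inequality for nonzero `u v`,
then the segment between the unit vectors lies in the unit sphere. -/
lemma segment_subset_sphere_of_norm_add_eq
    {E : Type*} [NormedAddCommGroup E] [NormedSpace ℝ E] {u v : E}
    (hu : u ≠ 0) (hv : v ≠ 0) (h : ‖u + v‖ = ‖u‖ + ‖v‖) :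
    segment ℝ (‖u‖⁻¹ • u) (‖v‖⁻¹ • v) ⊆ Metric.sphere (0 : E) 1 := by
  have hun : (0:ℝ) < ‖u‖ := norm_pos_iff.mpr hu
  have hvn : (0:ℝ) < ‖v‖ := norm_pos_iff.mpr hv
  set S := ‖u‖ + ‖v‖ with hS
  have hSpos : (0:ℝ) < S := by positivity
  set uu := ‖u‖⁻¹ • u
  set vv := ‖v‖⁻¹ • v
  have huu : ‖uu‖ = 1 := norm_smul_inv_norm hu
  have hvv : ‖vv‖ = 1 := norm_smul_inv_norm hv
  set lam0 : ℝ := ‖u‖ / S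
  set mu0 : ℝ := ‖v‖ / S
  have hl0 : 0 < lam0 := by positivity
  have hm0 : 0 < mu0 := by positivity
  have hsum0 : lam0 + mu0 = 1 := by
    show ‖u‖ / S + ‖v‖ / S = 1
    rw [← add_div, ← hS, div_self hSpos.ne']
  have hw0 : lam0 • uu + mu0 • vv = S⁻¹ • (u + v) := by
    simp only [lam0, mu0, uu, vv, smul_smul, smul_add]
    rw [div_mul_eq_mul_div, mul_inv_cancel₀ hun.ne', div_mul_eq_mul_div, mul_inv_cancel₀ hvn.ne']
    simp [div_eq_inv_mul]
  have hw0n : ‖lam0 • uu + mu0 • vv‖ = 1 := by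
    rw [hw0, norm_smul, h, Real.norm_eq_abs, abs_of_pos (inv_pos.mpr hSpos),
      inv_mul_cancel₀ hSpos.ne']
  rintro z ⟨lam, mu, hlam, hmu, hsum, rfl⟩
  have hle : ‖lam • uu + mu • vv‖ ≤ 1 := by
    calc ‖lam • uu + mu • vv‖ ≤ ‖lam • uu‖ + ‖mu • vv‖ := norm_add_le _ _
    _ = lam + mu := by rw [norm_smul lam uu, norm_smul mu vv, huu, hvv, Real.norm_eq_abs, Real.norm_eq_abs,
        abs_of_nonneg hlam, abs_of_nonneg hmu]; ring
    _ = 1 := hsum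
  have hge : 1 ≤ ‖lam • uu + mu • vv‖ := by
    rcases le_or_gt lam0 lam with hcase | hcase
    · -- lam ≥ lam0 > 0, write w0 = c • z + (1-c) • vv with c = lam0/lam
      have hlpos : 0 < lam := lt_of_lt_of_le hl0 hcase
      set c : ℝ := lam0 / lam
      have hc0 : 0 < c := by positivity
      have hc1 : c ≤ 1 := by rw [div_le_one hlpos]; exact hcase
      have hkey : lam0 • uu + mu0 • vv = c • (lam • uu + mu • vv) + (1 - c) • vv := by
        have h1 : c * lam = lam0 := div_mul_cancel₀ lam0 hlpos.ne'
        have h2 : c * mu + (1 - c) = mu0 := by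
          have e1 : mu = 1 - lam := by linarith
          have e2 : mu0 = 1 - lam0 := by linarith
          linear_combination c * e1 - h1 - e2
        rw [smul_add, smul_smul c lam uu, smul_smul c mu vv, h1, add_assoc,
          ← add_smul, h2]
      have := hw0n
      rw [hkey] at this
      have hb : 1 ≤ c * ‖lam • uu + mu • vv‖ + (1 - c) := by
        calc (1:ℝ) = ‖c • (lam • uu + mu • vv) + (1 - c) • vv‖ := this.symm
        _ ≤ ‖c • (lam • uu + mu • vv)‖ + ‖(1 - c) • vv‖ := norm_add_le _ _
        _ = c * ‖lam • uu + mu • vv‖ + (1 - c) := by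
            rw [norm_smul c (lam • uu + mu • vv), norm_smul (1-c) vv, hvv,
              Real.norm_eq_abs, Real.norm_eq_abs,
              abs_of_pos hc0, abs_of_nonneg (by linarith : (0:ℝ) ≤ 1 - c)]; ring
      nlinarith
    · -- lam < lam0, so mu > mu0 > 0
      have hmupos : 0 < mu := by
        have : mu0 < mu := by
          have : mu = 1 - lam := by linarith
          have : mu0 = 1 - lam0 := by linarith
          linarith
        linarith
      set c : ℝ := mu0 / mu
      have hc0 : 0 < c := by positivity
      have hc1 : c ≤ 1 := by
        rw [div_le_one hmupos]
        have h1 : mu = 1 - lam := by linarith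
        have h2 : mu0 = 1 - lam0 := by linarith
        linarith
      have hkey : lam0 • uu + mu0 • vv = c • (lam • uu + mu • vv) + (1 - c) • uu := by
        have h1 : c * mu = mu0 := div_mul_cancel₀ mu0 hmupos.ne'
        have h2 : c * lam + (1 - c) = lam0 := by
          have ha : lam = 1 - mu := by linarith
          have hb : lam0 = 1 - mu0 := by linarith
          linear_combination c * ha - h1 - hb
        rw [smul_add, smul_smul c lam uu, smul_smul c mu vv, h1,
          add_right_comm, add_comm (lam0 • uu), add_comm ((c*lam) • uu), ← add_smul, add_comm (1-c) (c*lam), h2, add_comm]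
      have := hw0n
      rw [hkey] at this
      have hb : 1 ≤ c * ‖lam • uu + mu • vv‖ + (1 - c) := by
        calc (1:ℝ) = ‖c • (lam • uu + mu • vv) + (1 - c) • uu‖ := this.symm
        _ ≤ ‖c • (lam • uu + mu • vv)‖ + ‖(1 - c) • uu‖ := norm_add_le _ _
        _ = c * ‖lam • uu + mu • vv‖ + (1 - c) := by
            rw [norm_smul c (lam • uu + mu • vv), norm_smul (1-c) uu, huu,
              Real.norm_eq_abs, Real.norm_eq_abs,
              abs_of_pos hc0, abs_of_nonneg (by linarith : (0:ℝ) ≤ 1 - c)]; ring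
      nlinarith
  rw [mem_sphere_iff_norm, sub_zero]
  linarith

theorem strict_inequality_on_half_open_segment
    {E : Type*} [NormedAddCommGroup E] [NormedSpace ℝ E]
    (p y : E) (A : Set E) (hA : A.Nonempty) (hpA : p ∉ A)
    (hattain : ∀ t ∈ Set.Ico (0 : ℝ) 1, ∃ a ∈ A,
      Metric.infDist (p + t • (y - p)) A = dist (p + t • (y - p)) a)
    (hyp : dist y p ≤ Metric.infDist y A)
    (hpar : ∀ a ∈ A, a ≠ p →
      ¬ ∃ u v : E, u ≠ v ∧ segment ℝ u v ⊆ Metric.sphere (0 : E) 1 ∧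
        (‖a - p‖⁻¹ • (a - p) = ‖v - u‖⁻¹ • (v - u) ∨
         ‖a - p‖⁻¹ • (a - p) = -(‖v - u‖⁻¹ • (v - u)))) :
    ∀ t ∈ Set.Ico (0 : ℝ) 1,
      dist (p + t • (y - p)) p < Metric.infDist (p + t • (y - p)) A := by
  intro t ht
  obtain ⟨ht0, ht1⟩ := ht
  by_contra hcon
  push_neg at hcon
  obtain ⟨a, haA, hda⟩ := hattain t ⟨ht0, ht1⟩
  set x := p + t • (y - p) with hx
  have hap : a ≠ p := fun h => hpA (h ▸ haA)
  set L : ℝ := ‖y - p‖ with hL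
  have hdxp : dist x p = t * L := by
    rw [hx, dist_eq_norm, add_sub_cancel_left, norm_smul, Real.norm_eq_abs, abs_of_nonneg ht0]
  have haxle : dist x a ≤ t * L := by rw [← hda, ← hdxp]; exact hcon
  -- degenerate case
  rcases eq_or_lt_of_le (by positivity : (0:ℝ) ≤ t * L) with hdeg | htL
  · have hxa : x = a := by
      have : dist x a ≤ 0 := by rw [← hdeg] at haxle; exact haxle
      exact dist_le_zero.mp this
    have hxp : x = p := by
      have : dist x p = 0 := by rw [hdxp, ← hdeg]
      exact dist_eq_zero.mp this
    exact hap (hxa ▸ hxp ▸ rfl)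
  have htpos : 0 < t := by
    rcases lt_or_eq_of_le ht0 with h | h
    · exact h
    · exfalso; rw [← h, zero_mul] at htL; exact lt_irrefl _ htL
  have hLpos : 0 < L := by
    by_contra h
    push_neg at h
    have : L = 0 := le_antisymm h (norm_nonneg _)
    rw [this, mul_zero] at htL; exact lt_irrefl _ htL
  have hyx : y - x = (1 - t) • (y - p) := by
    rw [hx]; module
  have hdyx : dist y x = (1 - t) * L := by
    rw [dist_eq_norm, hyx, norm_smul, Real.norm_eq_abs, abs_of_nonneg (by linarith)]
  -- the chain of inequalities
  have h1 : L ≤ Metric.infDist y A := by rw [hL, ← dist_eq_norm]; exact hyp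
  have h2 : Metric.infDist y A ≤ dist y a := Metric.infDist_le_dist_of_mem haA
  have h3 : dist y a ≤ dist y x + dist x a := dist_triangle y x a
  have hxaeq : dist x a = t * L := by
    have : L ≤ (1 - t) * L + dist x a := by
      calc L ≤ dist y a := le_trans h1 h2
      _ ≤ dist y x + dist x a := h3
      _ = (1 - t) * L + dist x a := by rw [hdyx]
    nlinarith
  have hyaeq : dist y a = L := by
    have : dist y a ≤ L := by
      calc dist y a ≤ dist y x + dist x a := h3
      _ = (1 - t) * L + t * L := by rw [hdyx, hxaeq]
      _ = L := by ring
    linarith [le_trans h1 h2]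
  -- triangle equality
  set u : E := y - x with hu
  set v : E := x - a with hv
  have hun : ‖u‖ = (1 - t) * L := by rw [hu, ← dist_eq_norm]; exact hdyx
  have hvn : ‖v‖ = t * L := by rw [hv, ← dist_eq_norm]; exact hxaeq
  have huvn : ‖u + v‖ = ‖u‖ + ‖v‖ := by
    have : u + v = y - a := by rw [hu, hv]; abel
    rw [this, ← dist_eq_norm, hyaeq, hun, hvn]; ring
  have hune : u ≠ 0 := by
    intro h; rw [h, norm_zero] at hun; nlinarith
  have hvne : v ≠ 0 := by
    intro h; rw [h, norm_zero] at hvn; nlinarith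
  have hseg := segment_subset_sphere_of_norm_add_eq hune hvne huvn
  set U : E := ‖u‖⁻¹ • u with hU
  set V : E := ‖v‖⁻¹ • v with hV
  have hVU : V - U = (t * L)⁻¹ • (p - a) := by
    have h1t : (1:ℝ) - t ≠ 0 := by linarith
    rw [hV, hU, hvn, hun, hv, hyx, hx]
    match_scalars <;> field_simp [h1t, hLpos.ne'] <;> ring
  have hapn : (0:ℝ) < ‖a - p‖ := norm_pos_iff.mpr (sub_ne_zero.mpr hap)
  have hVUn : ‖V - U‖ = (t * L)⁻¹ * ‖a - p‖ := by
    rw [hVU, norm_smul, Real.norm_eq_abs, abs_of_pos (by positivity), ← neg_sub a p, norm_neg]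
  have hne : U ≠ V := by
    intro h
    have : V - U = 0 := by rw [h, sub_self]
    rw [hVU] at this
    have : p - a = 0 := by
      have h2 := smul_eq_zero.mp this
      rcases h2 with h2 | h2
      · exact absurd h2 (by positivity)
      · exact h2
    exact hap (sub_eq_zero.mp this).symm
  refine hpar a haA hap ⟨U, V, hne, hseg, Or.inr ?_⟩
  have hc : ((t * L)⁻¹ * ‖a - p‖)⁻¹ * (t * L)⁻¹ = ‖a - p‖⁻¹ := by
    rw [mul_inv, inv_inv]
    field_simp [hapn.ne', htL.ne']
  rw [hVUn, hVU, smul_smul, hc, show p - a = -(a - p) by abel, smul_neg, neg_neg]
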